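/- Under the i.i.d. observation model, the mean error of the final TD iterate satisfies, for every k ≥ 0, E[‖V_k − V^π‖_2] ≤ 6 n √α/(d_min^{1/2} (1−γ)^{3/2}) + ‖V_0 − V^π‖_2 · n · ρ^k, where ρ = 1 − α·d_min·(1−γ). -/

import Mathlib

open Finset Matrix MeasureTheory ProbabilityTheory

noncomputable def tdPhi {S A : Type*} [DecidableEq S] (γ α : ℝ) (r : S → A → S → ℝ)
    (V₀ : S → ℝ) : ℕ → (ℕ → S × A × S) → S → ℝ
  | 0, _ => V₀
  | (k+1), x => fun t =>
      tdPhi γ α r V₀ k x t + α * (if t = (x k).1 then 1 else 0) *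
        (r (x k).1 (x k).2.1 (x k).2.2 + γ * tdPhi γ α r V₀ k x (x k).2.2
          - tdPhi γ α r V₀ k x (x k).1)

lemma tdPhi_congr {S A : Type*} [DecidableEq S] (γ α : ℝ) (r : S → A → S → ℝ)
    (V₀ : S → ℝ) (k : ℕ) (x y : ℕ → S × A × S) (h : ∀ i < k, x i = y i) :
    tdPhi γ α r V₀ k x = tdPhi γ α r V₀ k y := by
  induction k with
  | zero => rfl
  | succ k ih =>
    have hk : x k = y k := h k (Nat.lt_succ_self k)
    have ih' := ih (fun i hi => h i (hi.trans (Nat.lt_succ_self k)))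
    funext t
    simp only [tdPhi, ih', hk]

lemma integrable_comp_fin {Ω β : Type*} [MeasurableSpace Ω] {μ : Measure Ω}
    [IsFiniteMeasure μ] [MeasurableSpace β] [Fintype β] [Nonempty β]
    [MeasurableSingletonClass β] (g : Ω → β) (hg : Measurable g) (h : β → ℝ) :
    Integrable (fun ω => h (g ω)) μ := by
  have hm : Measurable (fun ω => h (g ω)) := (measurable_of_countable h).comp hg
  refine (integrable_const (Finset.univ.sup' Finset.univ_nonempty fun b => |h b|)).mono'
    hm.aestronglyMeasurable ?_
  filter_upwards with ω
  rw [Real.norm_eq_abs]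
  exact Finset.le_sup' (fun b => |h b|) (Finset.mem_univ (g ω))

set_option maxHeartbeats 2000000 in
/-- **Mean error bound for the final TD iterate (i.i.d. observation model).**
The observations `X k = (s_k, a_k, s'_k)` are i.i.d. with joint law
`q(s,a,s') = d(s)·π(a|s)·P(s'|s,a)`; the TD iterates start from a deterministic
`V 0 = V₀` with `‖V₀‖_∞ ≤ 1`; `V^π` solves the Bellman equation.  Then for every `k`,
`E[‖V k − V^π‖₂] ≤ 6 n √α/(d_min^{1/2} (1−γ)^{3/2}) + ‖V₀ − V^π‖₂ n ρ^k`,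
with `n = |S|` and `ρ = 1 − α·d_min·(1−γ)`. -/
theorem td_final_iterate_mean_error_bound
    {S A : Type*} [Fintype S] [Nonempty S] [DecidableEq S] [Fintype A]
    [MeasurableSpace S] [MeasurableSingletonClass S]
    [MeasurableSpace A] [MeasurableSingletonClass A]
    {Ω : Type*} [MeasurableSpace Ω] (μ : Measure Ω) [IsProbabilityMeasure μ]
    (γ α : ℝ) (hγ0 : 0 ≤ γ) (hγ1 : γ < 1) (hα0 : 0 < α) (hα1 : α < 1)
    (π : S → A → ℝ) (hπ0 : ∀ s a, 0 ≤ π s a) (hπ1 : ∀ s, ∑ a, π s a = 1)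
    (P : S → A → S → ℝ) (hP0 : ∀ s a s', 0 ≤ P s a s') (hP1 : ∀ s a, ∑ s', P s a s' = 1)
    (r : S → A → S → ℝ) (hr : ∀ s a s', |r s a s'| ≤ 1)
    (d : S → ℝ) (hd : ∀ s, 0 < d s) (hd1 : ∑ s, d s = 1)
    (X : ℕ → Ω → S × A × S) (hXmeas : ∀ k, Measurable (X k))
    (hIndep : iIndepFun X μ)
    (hLaw : ∀ k, μ.map (X k) =
      ∑ t : S × A × S,
        ENNReal.ofReal (d t.1 * π t.1 t.2.1 * P t.1 t.2.1 t.2.2) • Measure.dirac t)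
    (Vpi : S → ℝ)
    (hBell : ∀ s, Vpi s = (∑ a, ∑ s', π s a * P s a s' * r s a s') +
      γ * ∑ s', (∑ a, π s a * P s a s') * Vpi s')
    (V₀ : S → ℝ) (hV₀ : ‖V₀‖ ≤ 1)
    (V : ℕ → Ω → S → ℝ) (hV0 : ∀ ω, V 0 ω = V₀)
    (hVstep : ∀ k ω t, V (k + 1) ω t = V k ω t +
      α * (if t = (X k ω).1 then 1 else 0) *
        (r (X k ω).1 (X k ω).2.1 (X k ω).2.2 + γ * V k ω (X k ω).2.2 - V k ω (X k ω).1))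
    (ρ : ℝ) (hρ : ρ = 1 - α * (⨅ s : S, d s) * (1 - γ)) :
    ∀ k : ℕ,
      ∫ ω, Real.sqrt (∑ s, (V k ω s - Vpi s) ^ 2) ∂μ ≤
        6 * (Fintype.card S : ℝ) * Real.sqrt α /
            (Real.sqrt (⨅ s : S, d s) * Real.sqrt ((1 - γ) ^ 3)) +
          Real.sqrt (∑ s, (V₀ s - Vpi s) ^ 2) * (Fintype.card S : ℝ) * ρ ^ k := by
  classical
  -- nonemptiness
  have hA : Nonempty A := by
    by_contra h
    rw [not_nonempty_iff] at h
    have := hπ1 (Classical.arbitrary S)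
    simp [Finset.univ_eq_empty] at this
  haveI := hA
  haveI : Nonempty (S × A × S) := inferInstance
  obtain ⟨t₀⟩ := (inferInstance : Nonempty (S × A × S))
  -- min of d
  have hbdd : BddBelow (Set.range d) := (Set.finite_range d).bddBelow
  obtain ⟨s₀, hs₀⟩ := Finite.exists_min d
  have hdm_eq : (⨅ s, d s) = d s₀ := le_antisymm (ciInf_le hbdd s₀) (le_ciInf hs₀)
  set dm : ℝ := ⨅ s, d s with hdm_def
  have hdm_pos : 0 < dm := by rw [hdm_eq]; exact hd s₀
  have hdm_le : ∀ s, dm ≤ d s := fun s => ciInf_le hbdd s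
  have hd_le1 : ∀ s, d s ≤ 1 := by
    intro s
    rw [← hd1]
    exact Finset.single_le_sum (fun s _ => (hd s).le) (Finset.mem_univ s)
  set n : ℝ := (Fintype.card S : ℝ) with hn_def
  have hn1 : (1:ℝ) ≤ n := by
    rw [hn_def]
    exact_mod_cast Nat.one_le_iff_ne_zero.2 Fintype.card_ne_zero
  have hndm : n * dm ≤ 1 := by
    rw [← hd1]
    calc n * dm = ∑ _s : S, dm := by rw [Finset.sum_const, Finset.card_univ]; ring
    _ ≤ ∑ s, d s := Finset.sum_le_sum fun s _ => hdm_le s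
  have h1γ : 0 < 1 - γ := sub_pos.2 hγ1
  set M : ℝ := (1-γ)⁻¹ with hM_def
  have hM_pos : 0 < M := inv_pos.2 h1γ
  have hM_eq : 1 + γ * M = M := by
    rw [hM_def]; field_simp; ring
  have hM1 : 1 ≤ M := by nlinarith
  -- transition kernel
  set p : S → S → ℝ := fun s s' => ∑ a, π s a * P s a s' with hp_def
  have hp0 : ∀ s s', 0 ≤ p s s' := fun s s' =>
    Finset.sum_nonneg fun a _ => mul_nonneg (hπ0 s a) (hP0 s a s')
  have hp1 : ∀ s, ∑ s', p s s' = 1 := by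
    intro s
    rw [hp_def]
    rw [Finset.sum_comm]
    simp only [← Finset.mul_sum, hP1, mul_one]
    exact hπ1 s
  -- Vpi bound
  have hVpiB : ∀ s, |Vpi s| ≤ M := by
    obtain ⟨s₁, hs₁⟩ := Finite.exists_max fun s => |Vpi s|
    intro s
    refine (hs₁ s).trans ?_
    have h1 : |∑ a, ∑ s', π s₁ a * P s₁ a s' * r s₁ a s'| ≤ 1 := by
      calc |∑ a, ∑ s', π s₁ a * P s₁ a s' * r s₁ a s'|
          ≤ ∑ a, ∑ s', |π s₁ a * P s₁ a s' * r s₁ a s'| := by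
            refine (Finset.abs_sum_le_sum_abs _ _).trans ?_
            exact Finset.sum_le_sum fun a _ => Finset.abs_sum_le_sum_abs _ _
        _ ≤ ∑ a, ∑ s', π s₁ a * P s₁ a s' := by
            refine Finset.sum_le_sum fun a _ => Finset.sum_le_sum fun s' _ => ?_
            rw [abs_mul, abs_of_nonneg (mul_nonneg (hπ0 _ _) (hP0 _ _ _))]
            exact mul_le_of_le_one_right (mul_nonneg (hπ0 _ _) (hP0 _ _ _)) (hr _ _ _)
        _ = 1 := by
            simp only [← Finset.mul_sum, hP1, mul_one]
            exact hπ1 s₁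
    have h2 : |∑ s', (∑ a, π s₁ a * P s₁ a s') * Vpi s'| ≤ |Vpi s₁| := by
      calc |∑ s', (∑ a, π s₁ a * P s₁ a s') * Vpi s'|
          ≤ ∑ s', (∑ a, π s₁ a * P s₁ a s') * |Vpi s'| := by
            refine (Finset.abs_sum_le_sum_abs _ _).trans ?_
            refine Finset.sum_le_sum fun s' _ => ?_
            rw [abs_mul, abs_of_nonneg (hp0 s₁ s')]
        _ ≤ ∑ s', (∑ a, π s₁ a * P s₁ a s') * |Vpi s₁| :=
            Finset.sum_le_sum fun s' _ => mul_le_mul_of_nonneg_left (hs₁ s') (hp0 s₁ s')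
        _ = |Vpi s₁| := by rw [← Finset.sum_mul, hp1 s₁, one_mul]
    have h3 : |Vpi s₁| ≤ 1 + γ * |Vpi s₁| := by
      calc |Vpi s₁| = |(∑ a, ∑ s', π s₁ a * P s₁ a s' * r s₁ a s') +
          γ * ∑ s', (∑ a, π s₁ a * P s₁ a s') * Vpi s'| := by rw [← hBell s₁]
        _ ≤ |∑ a, ∑ s', π s₁ a * P s₁ a s' * r s₁ a s'| +
            γ * |∑ s', (∑ a, π s₁ a * P s₁ a s') * Vpi s'| := by
            refine (abs_add_le _ _).trans ?_
            rw [abs_mul, abs_of_nonneg hγ0]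
        _ ≤ 1 + γ * |Vpi s₁| := by
            exact add_le_add h1 (mul_le_mul_of_nonneg_left h2 hγ0)
    nlinarith [abs_nonneg (Vpi s₁), hM_eq]

  -- V bounds
  have hVb : ∀ k ω s, |V k ω s| ≤ M := by
    intro k
    induction k with
    | zero =>
      intro ω s
      rw [hV0]
      exact le_trans (le_trans (norm_le_pi_norm V₀ s) hV₀) hM1
    | succ k ih =>
      intro ω s
      rw [hVstep]
      by_cases hcs : s = (X k ω).1
      · rw [if_pos hcs, ← hcs]
        have h1 := abs_le.1 (ih ω s)
        have h2 := abs_le.1 (ih ω ((X k ω).2.2))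
        have h3 := abs_le.1 (hr s (X k ω).2.1 (X k ω).2.2)
        have hγM1 : 0 ≤ γ * (M - V k ω (X k ω).2.2) := mul_nonneg hγ0 (by linarith [h2.2])
        have hγM2 : 0 ≤ γ * (V k ω (X k ω).2.2 + M) := mul_nonneg hγ0 (by linarith [h2.1])
        have h4 : 0 ≤ (1-α) * (M - V k ω s) := mul_nonneg (by linarith) (by linarith [h1.2])
        have h5 : 0 ≤ α * (1 + γ*M - r s (X k ω).2.1 (X k ω).2.2
            - γ * V k ω (X k ω).2.2) := mul_nonneg hα0.le (by nlinarith)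
        have h6 : 0 ≤ (1-α) * (V k ω s + M) := mul_nonneg (by linarith) (by linarith [h1.1])
        have h7 : 0 ≤ α * (r s (X k ω).2.1 (X k ω).2.2 + γ * V k ω (X k ω).2.2
            + 1 + γ*M) := mul_nonneg hα0.le (by nlinarith)
        have hαM : α * (1 + γ*M) = α * M := by rw [hM_eq]
        rw [abs_le]
        constructor
        · linarith [h6, h7, hαM]
        · linarith [h4, h5, hαM]
      · rw [if_neg hcs]
        simpa using ih ω s
  have heB : ∀ k ω s, |V k ω s - Vpi s| ≤ 2*M := by
    intro k ω s
    have h1 := abs_le.1 (hVb k ω s)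
    have h2 := abs_le.1 (hVpiB s)
    rw [abs_le]; constructor <;> linarith
  have hδB : ∀ k ω (t : S × A × S),
      |r t.1 t.2.1 t.2.2 + γ * V k ω t.2.2 - V k ω t.1| ≤ 2*M := by
    intro k ω t
    have h1 := abs_le.1 (hVb k ω t.2.2)
    have h2 := abs_le.1 (hVb k ω t.1)
    have h3 := abs_le.1 (hr t.1 t.2.1 t.2.2)
    have hg1 : 0 ≤ γ * (M - V k ω t.2.2) := mul_nonneg hγ0 (by linarith [h1.2])
    have hg2 : 0 ≤ γ * (V k ω t.2.2 + M) := mul_nonneg hγ0 (by linarith [h1.1])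
    rw [abs_le]
    constructor <;> linarith [hM_eq, hg1, hg2, h2.1, h2.2, h3.1, h3.2]
  -- factorization through finitely many coordinates
  have hVPhi : ∀ k ω, V k ω = tdPhi γ α r V₀ k (fun i => X i ω) := by
    intro k
    induction k with
    | zero => intro ω; rw [hV0]; rfl
    | succ k ih =>
      intro ω
      funext t
      rw [hVstep]
      show _ = tdPhi γ α r V₀ (k+1) (fun i => X i ω) t
      simp only [tdPhi]
      rw [← ih ω]
  -- integrability of everything in sight
  have hint : ∀ (k : ℕ) (G : (S → ℝ) → (S × A × S) → ℝ),
      Integrable (fun ω => G (V k ω) (X k ω)) μ := by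
    intro k G
    have hg : Measurable (fun ω (i : (Finset.range (k+1) : Finset ℕ)) => X i.1 ω) :=
      measurable_pi_lambda _ fun i => hXmeas i.1
    have heq : (fun ω => G (V k ω) (X k ω)) = (fun ω =>
        (fun v : ↥(Finset.range (k+1)) → S × A × S =>
          G (tdPhi γ α r V₀ k (fun i => if h : i ∈ Finset.range (k+1) then v ⟨i,h⟩ else t₀))
            (if h : k ∈ Finset.range (k+1) then v ⟨k,h⟩ else t₀))
          (fun i : (Finset.range (k+1) : Finset ℕ) => X i.1 ω)) := by
      funext ω
      beta_reduce
      congr 1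
      · rw [hVPhi k ω]
        exact tdPhi_congr _ _ _ _ _ _ _ fun i hi => by
          rw [dif_pos (Finset.mem_range.2 (Nat.lt_succ_of_lt hi))]
      · rw [dif_pos (Finset.mem_range.2 (Nat.lt_succ_self k))]
    rw [heq]
    exact integrable_comp_fin _ hg
      (fun v : ↥(Finset.range (k+1)) → S × A × S =>
        G (tdPhi γ α r V₀ k (fun i => if h : i ∈ Finset.range (k+1) then v ⟨i,h⟩ else t₀))
          (if h : k ∈ Finset.range (k+1) then v ⟨k,h⟩ else t₀))
  -- independence: functions of V k are independent of X k
  have hprod : ∀ (k : ℕ) (F : (S → ℝ) → ℝ) (f : S × A × S → ℝ),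
      ∫ ω, F (V k ω) * f (X k ω) ∂μ =
        (∫ ω, F (V k ω) ∂μ) * ∫ ω, f (X k ω) ∂μ := by
    intro k F f
    have hdisj : Disjoint (Finset.range k) ({k} : Finset ℕ) := by simp
    have base := hIndep.indepFun_finset (Finset.range k) {k} hdisj hXmeas
    have h1m : Measurable (fun v : ↥(Finset.range k) → S × A × S =>
        F (tdPhi γ α r V₀ k (fun i => if h : i ∈ Finset.range k then v ⟨i,h⟩ else t₀))) :=
      measurable_of_countable _
    have h2m : Measurable (fun w : ↥({k} : Finset ℕ) → S × A × S =>
        f (w ⟨k, Finset.mem_singleton_self k⟩)) := measurable_of_countable _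
    have hcomp := base.comp h1m h2m
    have e1 : ((fun v : ↥(Finset.range k) → S × A × S =>
        F (tdPhi γ α r V₀ k (fun i => if h : i ∈ Finset.range k then v ⟨i,h⟩ else t₀))) ∘
        (fun ω (i : (Finset.range k : Finset ℕ)) => X i.1 ω)) = fun ω => F (V k ω) := by
      funext ω
      simp only [Function.comp_apply]
      congr 1
      rw [hVPhi k ω]
      exact (tdPhi_congr _ _ _ _ _ _ _ fun i hi => by
        rw [dif_pos (Finset.mem_range.2 hi)]).symm
    have e2 : ((fun w : ↥({k} : Finset ℕ) → S × A × S =>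
        f (w ⟨k, Finset.mem_singleton_self k⟩)) ∘
        (fun ω (i : ({k} : Finset ℕ)) => X i.1 ω)) = fun ω => f (X k ω) := rfl
    rw [e1, e2] at hcomp
    have := IndepFun.integral_fun_mul_eq_mul_integral hcomp
      (hint k fun W _ => F W).aestronglyMeasurable (hint k fun _ t => f t).aestronglyMeasurable
    exact this
  -- law of X k
  have hlawf : ∀ (k : ℕ) (f : S × A × S → ℝ),
      ∫ ω, f (X k ω) ∂μ =
        ∑ t : S × A × S, (d t.1 * π t.1 t.2.1 * P t.1 t.2.1 t.2.2) * f t := by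
    intro k f
    have hfm : Measurable f := measurable_of_countable f
    rw [← integral_map (hXmeas k).aemeasurable hfm.aestronglyMeasurable, hLaw k]
    rw [integral_finset_sum_measure ?_]
    · refine Finset.sum_congr rfl fun t _ => ?_
      rw [integral_smul_measure, integral_dirac,
        ENNReal.toReal_ofReal (mul_nonneg (mul_nonneg (hd _).le (hπ0 _ _)) (hP0 _ _ _)), smul_eq_mul]
    · intro t _
      refine ⟨hfm.aestronglyMeasurable, ?_⟩
      rw [HasFiniteIntegral, lintegral_smul_measure, lintegral_dirac]
      exact ENNReal.mul_lt_top ENNReal.ofReal_lt_top (by simp)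
  -- the joint law weights
  have hq0 : ∀ t : S × A × S, 0 ≤ d t.1 * π t.1 t.2.1 * P t.1 t.2.1 t.2.2 :=
    fun t => mul_nonneg (mul_nonneg (hd _).le (hπ0 _ _)) (hP0 _ _ _)
  have hq1 : ∑ t : S × A × S, d t.1 * π t.1 t.2.1 * P t.1 t.2.1 t.2.2 = 1 := by
    rw [Fintype.sum_prod_type]
    have : ∀ s : S, ∑ y : A × S, d s * π s y.1 * P s y.1 y.2 = d s := by
      intro s
      rw [Fintype.sum_prod_type]
      have : ∀ a : A, ∑ s' : S, d s * π s a * P s a s' = d s * π s a := by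
        intro a; rw [← Finset.mul_sum, hP1, mul_one]
      simp only [this, ← Finset.mul_sum, hπ1, mul_one]
    simp only [this, hd1]
  -- the Bellman rearrangement
  have hsum1 : ∀ (s : S) (W : S → ℝ),
      ∑ a, ∑ s', π s a * P s a s' * (r s a s' + γ * W s' - W s)
        = γ * ∑ s', p s s' * (W s' - Vpi s') - (W s - Vpi s) := by
    intro s W
    have t1 : ∑ a, ∑ s', π s a * P s a s' * (r s a s' + γ * W s' - W s)
        = (∑ a, ∑ s', π s a * P s a s' * r s a s')
          + (∑ a, ∑ s', π s a * P s a s' * (γ * W s'))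
          - (∑ a, ∑ s', π s a * P s a s' * W s) := by
      simp only [mul_add, mul_sub, Finset.sum_add_distrib, Finset.sum_sub_distrib]
    have t2 : ∑ a, ∑ s', π s a * P s a s' * (γ * W s') = γ * ∑ s', p s s' * W s' := by
      rw [Finset.sum_comm, Finset.mul_sum]
      refine Finset.sum_congr rfl fun s' _ => ?_
      simp only [hp_def, Finset.sum_mul]
      rw [Finset.mul_sum]
      refine Finset.sum_congr rfl fun a _ => by ring
    have t3 : ∑ a, ∑ s', π s a * P s a s' * W s = W s := by
      have h1 : ∀ a : A, ∑ s' : S, π s a * P s a s' * W s = π s a * W s := by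
        intro a
        rw [show (∑ s' : S, π s a * P s a s' * W s) = (∑ s' : S, P s a s') * (π s a * W s) by
          rw [Finset.sum_mul]; exact Finset.sum_congr rfl fun s' _ => by ring]
        rw [hP1, one_mul]
      simp only [h1, ← Finset.sum_mul, hπ1, one_mul]
    have t4 : ∑ a, ∑ s', π s a * P s a s' * r s a s'
        = Vpi s - γ * ∑ s', p s s' * Vpi s' := by
      have hB := hBell s
      simp only [hp_def]
      linarith
    have t5 : ∑ s', p s s' * (W s' - Vpi s')
        = (∑ s', p s s' * W s') - ∑ s', p s s' * Vpi s' := by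
      simp only [mul_sub, Finset.sum_sub_distrib]
    rw [t1, t2, t3, t4, t5]
    ring
  -- collapse of the weighted sum over observations
  have halg : ∀ (s : S) (W : S → ℝ),
      ∑ t : S × A × S, (d t.1 * π t.1 t.2.1 * P t.1 t.2.1 t.2.2) *
          ((if s = t.1 then (1:ℝ) else 0) *
            ((W s - Vpi s) * (r t.1 t.2.1 t.2.2 + γ * W t.2.2 - W t.1)))
        = d s * ((W s - Vpi s) *
            (γ * ∑ s', p s s' * (W s' - Vpi s') - (W s - Vpi s))) := by
    intro s W
    rw [Fintype.sum_prod_type]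
    have hrow : ∀ s₁ : S, ∑ y : A × S, (d s₁ * π s₁ y.1 * P s₁ y.1 y.2) *
        ((if s = s₁ then (1:ℝ) else 0) * ((W s - Vpi s) * (r s₁ y.1 y.2 + γ * W y.2 - W s₁)))
        = if s = s₁ then d s * ((W s - Vpi s) *
            (γ * ∑ s', p s s' * (W s' - Vpi s') - (W s - Vpi s))) else 0 := by
      intro s₁
      by_cases h : s = s₁
      · subst h
        simp only [eq_self_iff_true, if_true, one_mul]
        rw [Fintype.sum_prod_type]
        have hr1 : ∀ a : A, ∑ s' : S, (d s * π s a * P s a s') *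
            ((W s - Vpi s) * (r s a s' + γ * W s' - W s))
            = d s * (W s - Vpi s) * (∑ s' : S, π s a * P s a s' * (r s a s' + γ * W s' - W s)) := by
          intro a
          rw [Finset.mul_sum]
          exact Finset.sum_congr rfl fun s' _ => by ring
        simp only [hr1]
        rw [← Finset.mul_sum, hsum1 s W]
        ring
      · simp only [if_neg h, zero_mul, mul_zero, Finset.sum_const_zero]
    simp only [hrow]
    rw [Finset.sum_ite_eq, if_pos (Finset.mem_univ s)]
  -- nonnegativity of the second moments
  have hu0 : ∀ k s, 0 ≤ ∫ ω, (V k ω s - Vpi s)^2 ∂μ :=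
    fun k s => integral_nonneg fun ω => sq_nonneg _
  -- one-step recursion bound
  have hustep : ∀ (k : ℕ) (s : S) (Abd : ℝ), 0 ≤ Abd →
      (∀ s', ∫ ω, (V k ω s' - Vpi s')^2 ∂μ ≤ Abd) →
      ∫ ω, (V (k+1) ω s - Vpi s)^2 ∂μ ≤
        (∫ ω, (V k ω s - Vpi s)^2 ∂μ) * (1 - α * d s * (2-γ))
          + α * d s * γ * Abd + 4*α^2*M^2 := by
    intro k s Abd hA0 hAb
    -- pointwise expansion of the squared error
    have hpt : ∀ ω, (V (k+1) ω s - Vpi s)^2 = (V k ω s - Vpi s)^2 +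
        ∑ t : S × A × S, (if X k ω = t then (1:ℝ) else 0) *
          (2*α * ((if s = t.1 then (1:ℝ) else 0) *
              ((V k ω s - Vpi s) * (r t.1 t.2.1 t.2.2 + γ * V k ω t.2.2 - V k ω t.1)))
           + α^2 * ((if s = t.1 then (1:ℝ) else 0) *
              (r t.1 t.2.1 t.2.2 + γ * V k ω t.2.2 - V k ω t.1)^2)) := by
      intro ω
      have hcol : ∀ (h : S × A × S → ℝ),
          ∑ t : S × A × S, (if X k ω = t then (1:ℝ) else 0) * h t = h (X k ω) := by
        intro h
        simp only [ite_mul, one_mul, zero_mul]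
        rw [Finset.sum_ite_eq]
        simp
      rw [hcol]
      rw [hVstep]
      by_cases hc : s = (X k ω).1
      · rw [if_pos hc]
        ring
      · rw [if_neg hc]
        ring
    -- abbreviations for the two conditional integrals
    set I₁ : S × A × S → ℝ := fun t => ∫ ω, (if s = t.1 then (1:ℝ) else 0) *
        ((V k ω s - Vpi s) * (r t.1 t.2.1 t.2.2 + γ * V k ω t.2.2 - V k ω t.1)) ∂μ with hI₁
    set I₂ : S × A × S → ℝ := fun t => ∫ ω, (if s = t.1 then (1:ℝ) else 0) *
        (r t.1 t.2.1 t.2.2 + γ * V k ω t.2.2 - V k ω t.1)^2 ∂μ with hI₂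
    have hintBig : ∀ t : S × A × S, Integrable (fun ω =>
        (if X k ω = t then (1:ℝ) else 0) *
          (2*α * ((if s = t.1 then (1:ℝ) else 0) *
              ((V k ω s - Vpi s) * (r t.1 t.2.1 t.2.2 + γ * V k ω t.2.2 - V k ω t.1)))
           + α^2 * ((if s = t.1 then (1:ℝ) else 0) *
              (r t.1 t.2.1 t.2.2 + γ * V k ω t.2.2 - V k ω t.1)^2))) μ := by
      intro t
      exact hint k (fun W x => (if x = t then (1:ℝ) else 0) *
          (2*α * ((if s = t.1 then (1:ℝ) else 0) *
              ((W s - Vpi s) * (r t.1 t.2.1 t.2.2 + γ * W t.2.2 - W t.1)))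
           + α^2 * ((if s = t.1 then (1:ℝ) else 0) *
              (r t.1 t.2.1 t.2.2 + γ * W t.2.2 - W t.1)^2)))
    -- the expansion of the second moment
    have hexp : ∫ ω, (V (k+1) ω s - Vpi s)^2 ∂μ
        = (∫ ω, (V k ω s - Vpi s)^2 ∂μ)
          + ∑ t : S × A × S, (d t.1 * π t.1 t.2.1 * P t.1 t.2.1 t.2.2) *
              (2*α * I₁ t + α^2 * I₂ t) := by
      have e0 : ∫ ω, (V (k+1) ω s - Vpi s)^2 ∂μ = ∫ ω, ((V k ω s - Vpi s)^2 +
          ∑ t : S × A × S, (if X k ω = t then (1:ℝ) else 0) *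
            (2*α * ((if s = t.1 then (1:ℝ) else 0) *
                ((V k ω s - Vpi s) * (r t.1 t.2.1 t.2.2 + γ * V k ω t.2.2 - V k ω t.1)))
             + α^2 * ((if s = t.1 then (1:ℝ) else 0) *
                (r t.1 t.2.1 t.2.2 + γ * V k ω t.2.2 - V k ω t.1)^2))) ∂μ :=
        integral_congr_ae (Filter.Eventually.of_forall hpt)
      rw [e0, integral_add (hint k fun W _ => (W s - Vpi s)^2)
        (integrable_finset_sum _ fun t _ => hintBig t),
        integral_finset_sum _ fun t _ => hintBig t]
      congr 1
      refine Finset.sum_congr rfl fun t _ => ?_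
      have e1 : (fun ω => (if X k ω = t then (1:ℝ) else 0) *
          (2*α * ((if s = t.1 then (1:ℝ) else 0) *
              ((V k ω s - Vpi s) * (r t.1 t.2.1 t.2.2 + γ * V k ω t.2.2 - V k ω t.1)))
           + α^2 * ((if s = t.1 then (1:ℝ) else 0) *
              (r t.1 t.2.1 t.2.2 + γ * V k ω t.2.2 - V k ω t.1)^2)))
          = fun ω => (fun W => (2*α * ((if s = t.1 then (1:ℝ) else 0) *
              ((W s - Vpi s) * (r t.1 t.2.1 t.2.2 + γ * W t.2.2 - W t.1)))
           + α^2 * ((if s = t.1 then (1:ℝ) else 0) *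
              (r t.1 t.2.1 t.2.2 + γ * W t.2.2 - W t.1)^2))) (V k ω) *
            (fun x => if x = t then (1:ℝ) else 0) (X k ω) := by
        funext ω
        exact mul_comm _ _
      rw [e1, hprod k (fun W => (2*α * ((if s = t.1 then (1:ℝ) else 0) *
              ((W s - Vpi s) * (r t.1 t.2.1 t.2.2 + γ * W t.2.2 - W t.1)))
           + α^2 * ((if s = t.1 then (1:ℝ) else 0) *
              (r t.1 t.2.1 t.2.2 + γ * W t.2.2 - W t.1)^2)))
        (fun x => if x = t then (1:ℝ) else 0),
        hlawf k (fun x => if x = t then (1:ℝ) else 0)]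
      have e2 : ∑ t' : S × A × S, (d t'.1 * π t'.1 t'.2.1 * P t'.1 t'.2.1 t'.2.2) *
          (if t' = t then (1:ℝ) else 0) = d t.1 * π t.1 t.2.1 * P t.1 t.2.1 t.2.2 := by
        simp only [mul_ite, mul_one, mul_zero]
        rw [Finset.sum_ite_eq']
        simp
      rw [e2]
      rw [integral_add ((hint k fun W _ => (if s = t.1 then (1:ℝ) else 0) *
          ((W s - Vpi s) * (r t.1 t.2.1 t.2.2 + γ * W t.2.2 - W t.1))).const_mul (2*α))
        ((hint k fun W _ => (if s = t.1 then (1:ℝ) else 0) *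
          (r t.1 t.2.1 t.2.2 + γ * W t.2.2 - W t.1)^2).const_mul (α^2)),
        integral_const_mul (2*α), integral_const_mul (α^2)]
      exact mul_comm _ _
    -- bound on the square term
    have hSq : ∀ t : S × A × S, I₂ t ≤ 4*M^2 := by
      intro t
      have hb : ∀ ω, (if s = t.1 then (1:ℝ) else 0) *
          (r t.1 t.2.1 t.2.2 + γ * V k ω t.2.2 - V k ω t.1)^2 ≤ 4*M^2 := by
        intro ω
        have h := hδB k ω t
        have h2 : (r t.1 t.2.1 t.2.2 + γ * V k ω t.2.2 - V k ω t.1)^2 ≤ (2*M)^2 := by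
          rw [← sq_abs]
          exact pow_le_pow_left₀ (abs_nonneg _) h 2
        by_cases hc : s = t.1
        · rw [if_pos hc, one_mul]; nlinarith
        · rw [if_neg hc, zero_mul]; positivity
      calc I₂ t ≤ ∫ _ω, 4*M^2 ∂μ := by
            refine integral_mono (hint k fun W _ => (if s = t.1 then (1:ℝ) else 0) *
              (r t.1 t.2.1 t.2.2 + γ * W t.2.2 - W t.1)^2) (integrable_const _) hb
        _ = 4*M^2 := by simp
    have hSqsum : ∑ t : S × A × S, (d t.1 * π t.1 t.2.1 * P t.1 t.2.1 t.2.2) * I₂ t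
        ≤ 4*M^2 := by
      calc ∑ t : S × A × S, (d t.1 * π t.1 t.2.1 * P t.1 t.2.1 t.2.2) * I₂ t
          ≤ ∑ t : S × A × S, (d t.1 * π t.1 t.2.1 * P t.1 t.2.1 t.2.2) * (4*M^2) :=
            Finset.sum_le_sum fun t _ => mul_le_mul_of_nonneg_left (hSq t) (hq0 t)
        _ = 4*M^2 := by rw [← Finset.sum_mul, hq1, one_mul]
    -- bound on the cross term
    have hI₂int : ∀ s' : S, True := fun _ => trivial
    have hCswap : ∑ t : S × A × S, (d t.1 * π t.1 t.2.1 * P t.1 t.2.1 t.2.2) * I₁ t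
        = ∫ ω, ∑ t : S × A × S, (d t.1 * π t.1 t.2.1 * P t.1 t.2.1 t.2.2) *
            ((if s = t.1 then (1:ℝ) else 0) *
              ((V k ω s - Vpi s) * (r t.1 t.2.1 t.2.2 + γ * V k ω t.2.2 - V k ω t.1))) ∂μ := by
      rw [integral_finset_sum _ (fun t _ => (hint k fun W _ => (if s = t.1 then (1:ℝ) else 0) *
        ((W s - Vpi s) * (r t.1 t.2.1 t.2.2 + γ * W t.2.2 - W t.1))).const_mul
          (d t.1 * π t.1 t.2.1 * P t.1 t.2.1 t.2.2))]
      exact Finset.sum_congr rfl fun t _ => (integral_const_mul _ _).symm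
    have hkey : ∀ ω, (V k ω s - Vpi s) *
        (γ * ∑ s', p s s' * (V k ω s' - Vpi s') - (V k ω s - Vpi s))
        ≤ (∑ s', p s s' * γ / 2 * ((V k ω s - Vpi s)^2 + (V k ω s' - Vpi s')^2))
          - (V k ω s - Vpi s)^2 := by
      intro ω
      have h1 : (V k ω s - Vpi s) * (γ * ∑ s', p s s' * (V k ω s' - Vpi s'))
          = ∑ s', p s s' * γ * ((V k ω s - Vpi s) * (V k ω s' - Vpi s')) := by
        rw [Finset.mul_sum, Finset.mul_sum]
        exact Finset.sum_congr rfl fun s' _ => by ring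
      have h2 : ∑ s', p s s' * γ * ((V k ω s - Vpi s) * (V k ω s' - Vpi s'))
          ≤ ∑ s', p s s' * γ / 2 * ((V k ω s - Vpi s)^2 + (V k ω s' - Vpi s')^2) := by
        refine Finset.sum_le_sum fun s' _ => ?_
        nlinarith [mul_nonneg (hp0 s s') hγ0,
          mul_nonneg (mul_nonneg (hp0 s s') hγ0)
            (sq_nonneg (V k ω s - Vpi s - (V k ω s' - Vpi s')))]
      linarith [h1, h2]
    have hCross : ∑ t : S × A × S, (d t.1 * π t.1 t.2.1 * P t.1 t.2.1 t.2.2) * I₁ t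
        ≤ d s * (γ * ((∫ ω, (V k ω s - Vpi s)^2 ∂μ) + Abd)/2
            - ∫ ω, (V k ω s - Vpi s)^2 ∂μ) := by
      rw [hCswap]
      have hmid : ∫ ω, d s * ((∑ s', p s s' * γ / 2 *
            ((V k ω s - Vpi s)^2 + (V k ω s' - Vpi s')^2))
            - (V k ω s - Vpi s)^2) ∂μ
          = d s * ((∑ s', p s s' * γ / 2 *
              ((∫ ω, (V k ω s - Vpi s)^2 ∂μ) + ∫ ω, (V k ω s' - Vpi s')^2 ∂μ))
              - ∫ ω, (V k ω s - Vpi s)^2 ∂μ) := by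
        rw [integral_const_mul]
        congr 1
        rw [integral_sub (integrable_finset_sum _ fun s' _ =>
            hint k fun W _ => p s s' * γ / 2 * ((W s - Vpi s)^2 + (W s' - Vpi s')^2))
          (hint k fun W _ => (W s - Vpi s)^2),
          integral_finset_sum _ (fun s' _ =>
            hint k fun W _ => p s s' * γ / 2 * ((W s - Vpi s)^2 + (W s' - Vpi s')^2))]
        congr 1
        refine Finset.sum_congr rfl fun s' _ => ?_
        rw [integral_const_mul, integral_add (hint k fun W _ => (W s - Vpi s)^2)
          (hint k fun W _ => (W s' - Vpi s')^2)]
      calc ∫ ω, ∑ t : S × A × S, (d t.1 * π t.1 t.2.1 * P t.1 t.2.1 t.2.2) *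
            ((if s = t.1 then (1:ℝ) else 0) *
              ((V k ω s - Vpi s) * (r t.1 t.2.1 t.2.2 + γ * V k ω t.2.2 - V k ω t.1))) ∂μ
          = ∫ ω, d s * ((V k ω s - Vpi s) *
              (γ * ∑ s', p s s' * (V k ω s' - Vpi s') - (V k ω s - Vpi s))) ∂μ :=
            integral_congr_ae (Filter.Eventually.of_forall fun ω => halg s (V k ω))
        _ ≤ ∫ ω, d s * ((∑ s', p s s' * γ / 2 *
              ((V k ω s - Vpi s)^2 + (V k ω s' - Vpi s')^2))
              - (V k ω s - Vpi s)^2) ∂μ := by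
            refine integral_mono (hint k fun W _ => d s * ((W s - Vpi s) *
                (γ * ∑ s', p s s' * (W s' - Vpi s') - (W s - Vpi s))))
              (hint k fun W _ => d s * ((∑ s', p s s' * γ / 2 *
                ((W s - Vpi s)^2 + (W s' - Vpi s')^2)) - (W s - Vpi s)^2))
              (fun ω => mul_le_mul_of_nonneg_left (hkey ω) (hd s).le)
        _ = d s * ((∑ s', p s s' * γ / 2 *
              ((∫ ω, (V k ω s - Vpi s)^2 ∂μ) + ∫ ω, (V k ω s' - Vpi s')^2 ∂μ))
              - ∫ ω, (V k ω s - Vpi s)^2 ∂μ) := hmid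
        _ ≤ d s * ((∑ s', p s s' * γ / 2 *
              ((∫ ω, (V k ω s - Vpi s)^2 ∂μ) + Abd))
              - ∫ ω, (V k ω s - Vpi s)^2 ∂μ) := by
            refine mul_le_mul_of_nonneg_left (sub_le_sub_right (Finset.sum_le_sum
              fun s' _ => mul_le_mul_of_nonneg_left (add_le_add le_rfl (hAb s'))
                (by have := hp0 s s'; positivity)) _) (hd s).le
        _ = d s * (γ * ((∫ ω, (V k ω s - Vpi s)^2 ∂μ) + Abd)/2
              - ∫ ω, (V k ω s - Vpi s)^2 ∂μ) := by
            congr 1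
            have : ∑ s', p s s' * γ / 2 * ((∫ ω, (V k ω s - Vpi s)^2 ∂μ) + Abd)
                = (∑ s', p s s') * (γ / 2 * ((∫ ω, (V k ω s - Vpi s)^2 ∂μ) + Abd)) := by
              rw [Finset.sum_mul]
              exact Finset.sum_congr rfl fun s' _ => by ring
            rw [this, hp1 s]
            ring
    -- put everything together
    have hsplit : ∑ t : S × A × S, (d t.1 * π t.1 t.2.1 * P t.1 t.2.1 t.2.2) *
        (2*α * I₁ t + α^2 * I₂ t)
        = 2*α * (∑ t : S × A × S, (d t.1 * π t.1 t.2.1 * P t.1 t.2.1 t.2.2) * I₁ t)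
          + α^2 * (∑ t : S × A × S, (d t.1 * π t.1 t.2.1 * P t.1 t.2.1 t.2.2) * I₂ t) := by
      rw [Finset.mul_sum, Finset.mul_sum, ← Finset.sum_add_distrib]
      exact Finset.sum_congr rfl fun t _ => by ring
    rw [hexp, hsplit]
    have b1 : 2*α * (∑ t : S × A × S, (d t.1 * π t.1 t.2.1 * P t.1 t.2.1 t.2.2) * I₁ t)
        ≤ 2*α * (d s * (γ * ((∫ ω, (V k ω s - Vpi s)^2 ∂μ) + Abd)/2
            - ∫ ω, (V k ω s - Vpi s)^2 ∂μ)) :=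
      mul_le_mul_of_nonneg_left hCross (by positivity)
    have b2 : α^2 * (∑ t : S × A × S, (d t.1 * π t.1 t.2.1 * P t.1 t.2.1 t.2.2) * I₂ t)
        ≤ α^2 * (4*M^2) := mul_le_mul_of_nonneg_left hSqsum (by positivity)
    nlinarith [b1, b2]
  -- initial second moment
  have hu00 : ∀ s, ∫ ω, (V 0 ω s - Vpi s)^2 ∂μ = (V₀ s - Vpi s)^2 := by
    intro s
    have e0 : ∫ ω, (V 0 ω s - Vpi s)^2 ∂μ = ∫ _ω, (V₀ s - Vpi s)^2 ∂μ :=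
      integral_congr_ae (Filter.Eventually.of_forall fun ω => by simp only []; rw [hV0 ω])
    rw [e0]; simp
  set M0 : ℝ := ∑ s, (V₀ s - Vpi s)^2 with hM0_def
  have hM0nn : 0 ≤ M0 := Finset.sum_nonneg fun s _ => sq_nonneg _
  have hρ0 : 0 ≤ ρ := by
    rw [hρ]
    have hdm1 : dm ≤ 1 := (hdm_le s₀).trans (hd_le1 s₀)
    have h1' : 0 ≤ dm*(1-γ) := by positivity
    have h2' : dm*(1-γ) ≤ 1 := by nlinarith
    nlinarith [mul_le_mul_of_nonneg_right hα1.le h1']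
  -- ℓ² ≤ ℓ¹ pointwise
  have hsqrt_sum : ∀ (g : S → ℝ), Real.sqrt (∑ s, (g s)^2) ≤ ∑ s, |g s| := by
    intro g
    have h1 : ∑ s, (g s)^2 ≤ (∑ s, |g s|)^2 := by
      rw [sq]
      calc ∑ s, (g s)^2 = ∑ s, |g s| * |g s| := by
            refine Finset.sum_congr rfl fun s _ => ?_
            rw [sq]; exact (abs_mul_abs_self (g s)).symm
        _ ≤ ∑ s, |g s| * (∑ s', |g s'|) :=
            Finset.sum_le_sum fun s _ => mul_le_mul_of_nonneg_left
              (Finset.single_le_sum (fun s' _ => abs_nonneg (g s')) (Finset.mem_univ s))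
              (abs_nonneg _)
        _ = (∑ s, |g s|) * (∑ s', |g s'|) := by rw [← Finset.sum_mul]
    calc Real.sqrt (∑ s, (g s)^2) ≤ Real.sqrt ((∑ s, |g s|)^2) := Real.sqrt_le_sqrt h1
      _ = ∑ s, |g s| := Real.sqrt_sq (Finset.sum_nonneg fun s _ => abs_nonneg _)
  -- mean absolute deviation from second moment
  have habs_le : ∀ (k : ℕ) (s : S) (c : ℝ), 0 < c →
      (∫ ω, (V k ω s - Vpi s)^2 ∂μ) ≤ c^2 →
      ∫ ω, |V k ω s - Vpi s| ∂μ ≤ c := by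
    intro k s c hc hu
    have hpt2 : ∀ ω, |V k ω s - Vpi s| ≤ (V k ω s - Vpi s)^2/(2*c) + c/2 := by
      intro ω
      rw [div_add_div _ _ (by positivity) (by norm_num : (2:ℝ) ≠ 0)]
      rw [le_div_iff₀ (by positivity)]
      nlinarith [sq_nonneg (|V k ω s - Vpi s| - c), sq_abs (V k ω s - Vpi s)]
    calc ∫ ω, |V k ω s - Vpi s| ∂μ
        ≤ ∫ ω, ((V k ω s - Vpi s)^2/(2*c) + c/2) ∂μ :=
          integral_mono (hint k fun W _ => |W s - Vpi s|)
            (hint k fun W _ => (W s - Vpi s)^2/(2*c) + c/2) hpt2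
      _ = (∫ ω, (V k ω s - Vpi s)^2 ∂μ)/(2*c) + c/2 := by
          rw [integral_add (hint k fun W _ => (W s - Vpi s)^2/(2*c)) (integrable_const _),
            integral_div]
          simp
      _ ≤ c^2/(2*c) + c/2 := by gcongr
      _ = c := by field_simp; ring
  -- master bound via the ℓ¹ norm
  have hbound_sqrt : ∀ (k : ℕ) (c : ℝ), 0 < c →
      (∀ s, ∫ ω, (V k ω s - Vpi s)^2 ∂μ ≤ c^2) →
      ∫ ω, Real.sqrt (∑ s, (V k ω s - Vpi s)^2) ∂μ ≤ n * c := by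
    intro k c hc hu
    calc ∫ ω, Real.sqrt (∑ s, (V k ω s - Vpi s)^2) ∂μ
        ≤ ∫ ω, ∑ s, |V k ω s - Vpi s| ∂μ :=
          integral_mono (hint k fun W _ => Real.sqrt (∑ s, (W s - Vpi s)^2))
            (hint k fun W _ => ∑ s, |W s - Vpi s|)
            (fun ω => hsqrt_sum fun s => V k ω s - Vpi s)
      _ = ∑ s, ∫ ω, |V k ω s - Vpi s| ∂μ :=
          integral_finset_sum _ fun s _ => hint k fun W _ => |W s - Vpi s|
      _ ≤ ∑ _s : S, c := Finset.sum_le_sum fun s _ => habs_le k s c hc (hu s)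
      _ = n * c := by rw [Finset.sum_const, Finset.card_univ, nsmul_eq_mul]
  -- positivity of the target denominator
  have hden : 0 < Real.sqrt dm * Real.sqrt ((1-γ)^3) := by positivity
  intro k
  by_cases hcase : α ≤ (1-γ)/(9*n^2)
  · -- small step size: use the recursion
    set ρ₂ : ℝ := 1 - 2*α*dm*(1-γ) with hρ₂_def
    set N : ℝ := 2*α/(dm*(1-γ)^3) with hN_def
    have hN_pos : 0 < N := by positivity
    have hα19 : α ≤ 1/9 := by
      have h9 : (1-γ)/(9*n^2) ≤ 1/9 := by
        rw [div_le_div_iff₀ (by positivity) (by norm_num)]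
        nlinarith
      linarith
    have hρ₂0 : 0 ≤ ρ₂ := by
      rw [hρ₂_def]
      have hdm1 : dm ≤ 1 := (hdm_le s₀).trans (hd_le1 s₀)
      have h1' : 0 ≤ dm*(1-γ) := by positivity
      have h2' : dm*(1-γ) ≤ 1 := by nlinarith
      nlinarith [mul_le_mul_of_nonneg_right hα19 h1']
    have hρ₂1 : ρ₂ ≤ 1 := by
      rw [hρ₂_def]
      nlinarith [mul_pos (mul_pos hα0 hdm_pos) h1γ]
    have hρ₂ρ : ρ₂ ≤ ρ^2 := by
      rw [hρ₂_def, hρ]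
      nlinarith [sq_nonneg (α*dm*(1-γ))]
    have hcoef : ∀ s : S, 0 ≤ 1 - α * d s * (2-γ) := by
      intro s
      have hads : α * d s ≤ α := by
        have := mul_le_mul_of_nonneg_left (hd_le1 s) hα0.le
        linarith
      have h1 : α * d s * (2-γ) ≤ α * 2 := by
        nlinarith [mul_le_mul_of_nonneg_right hads (by linarith : (0:ℝ) ≤ 2-γ),
          mul_nonneg hα0.le hγ0]
      linarith
    have hfix : 4*α^2*M^2 = (1-ρ₂)*N := by
      rw [hρ₂_def, hN_def, hM_def]
      field_simp
      ring
    have hmain : ∀ (m : ℕ) (s : S), ∫ ω, (V m ω s - Vpi s)^2 ∂μ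
        ≤ ρ₂^m * M0 + (1 - ρ₂^m) * N := by
      intro m
      induction m with
      | zero =>
        intro s
        rw [hu00 s]
        simp only [pow_zero, one_mul, sub_self, zero_mul, add_zero]
        rw [hM0_def]
        exact Finset.single_le_sum (f := fun s' => (V₀ s' - Vpi s')^2)
          (fun s' _ => sq_nonneg _) (Finset.mem_univ s)
      | succ m ih =>
        intro s
        have hρ₂m0 : 0 ≤ ρ₂^m := pow_nonneg hρ₂0 m
        have hρ₂m1 : ρ₂^m ≤ 1 := pow_le_one₀ hρ₂0 hρ₂1
        have hA0 : 0 ≤ ρ₂^m * M0 + (1 - ρ₂^m) * N :=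
          add_nonneg (mul_nonneg hρ₂m0 hM0nn)
            (mul_nonneg (by linarith) hN_pos.le)
        have h := hustep m s _ hA0 ih
        calc ∫ ω, (V (m+1) ω s - Vpi s)^2 ∂μ
            ≤ (∫ ω, (V m ω s - Vpi s)^2 ∂μ) * (1 - α * d s * (2-γ))
              + α * d s * γ * (ρ₂^m * M0 + (1 - ρ₂^m) * N) + 4*α^2*M^2 := h
          _ ≤ (ρ₂^m * M0 + (1 - ρ₂^m) * N) * (1 - α * d s * (2-γ))
              + α * d s * γ * (ρ₂^m * M0 + (1 - ρ₂^m) * N) + 4*α^2*M^2 := by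
              have := mul_le_mul_of_nonneg_right (ih s) (hcoef s)
              linarith
          _ = (ρ₂^m * M0 + (1 - ρ₂^m) * N) * (1 - 2*(α * d s)*(1-γ)) + 4*α^2*M^2 := by
              ring
          _ ≤ (ρ₂^m * M0 + (1 - ρ₂^m) * N) * (1 - 2*(α * dm)*(1-γ)) + 4*α^2*M^2 := by
              have hle : 1 - 2*(α * d s)*(1-γ) ≤ 1 - 2*(α * dm)*(1-γ) := by
                nlinarith [hdm_le s, hα0, h1γ]
              nlinarith [mul_le_mul_of_nonneg_left hle hA0]
          _ = ρ₂ * (ρ₂^m * M0 + (1 - ρ₂^m) * N) + (1-ρ₂)*N := by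
              rw [← hfix, hρ₂_def]; ring
          _ = ρ₂^(m+1) * M0 + (1 - ρ₂^(m+1)) * N := by ring
    set c : ℝ := ρ^k * Real.sqrt M0 + Real.sqrt N with hc_def
    have hc_pos : 0 < c := by
      have : 0 < Real.sqrt N := Real.sqrt_pos.2 hN_pos
      have : 0 ≤ ρ^k * Real.sqrt M0 :=
        mul_nonneg (pow_nonneg hρ0 k) (Real.sqrt_nonneg _)
      rw [hc_def]; linarith [Real.sqrt_pos.2 hN_pos]
    have huc : ∀ s, ∫ ω, (V k ω s - Vpi s)^2 ∂μ ≤ c^2 := by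
      intro s
      have h1 := hmain k s
      have hk2 : ρ₂^k ≤ (ρ^k)^2 := by
        calc ρ₂^k ≤ (ρ^2)^k := pow_le_pow_left₀ hρ₂0 hρ₂ρ k
          _ = (ρ^k)^2 := by rw [← pow_mul, ← pow_mul, mul_comm]
      have hρ₂k0 : 0 ≤ ρ₂^k := pow_nonneg hρ₂0 k
      have hsq1 : Real.sqrt M0 ^2 = M0 := Real.sq_sqrt hM0nn
      have hsq2 : Real.sqrt N ^2 = N := Real.sq_sqrt hN_pos.le
      have ec : c^2 = (ρ^k)^2 * M0 + (2*(ρ^k * Real.sqrt M0 * Real.sqrt N) + N) := by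
        calc c^2 = (ρ^k)^2*(Real.sqrt M0)^2 + (2*(ρ^k * Real.sqrt M0 * Real.sqrt N)
            + (Real.sqrt N)^2) := by rw [hc_def]; ring
          _ = (ρ^k)^2 * M0 + (2*(ρ^k * Real.sqrt M0 * Real.sqrt N) + N) := by
            rw [hsq1, hsq2]
      rw [ec]
      linarith only [h1, mul_le_mul_of_nonneg_right hk2 hM0nn,
        mul_nonneg hρ₂k0 hN_pos.le,
        mul_nonneg (mul_nonneg (pow_nonneg hρ0 k) (Real.sqrt_nonneg M0))
          (Real.sqrt_nonneg N)]
    have hfinal := hbound_sqrt k c hc_pos huc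
    have hNsqrt : n * Real.sqrt N ≤ 6 * n * Real.sqrt α /
        (Real.sqrt dm * Real.sqrt ((1-γ)^3)) := by
      rw [le_div_iff₀ hden]
      have e1 : Real.sqrt N * (Real.sqrt dm * Real.sqrt ((1-γ)^3))
          = Real.sqrt (2*α) := by
        rw [← Real.sqrt_mul hdm_pos.le, ← Real.sqrt_mul hN_pos.le]
        congr 1
        rw [hN_def]
        exact div_mul_cancel₀ _ (by positivity)
      have e2 : Real.sqrt (2*α) = Real.sqrt 2 * Real.sqrt α :=
        Real.sqrt_mul (by norm_num) α
      have e3 : Real.sqrt 2 ≤ 2 := by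
        nlinarith [Real.sq_sqrt (by norm_num : (0:ℝ) ≤ 2), Real.sqrt_nonneg 2]
      calc n * Real.sqrt N * (Real.sqrt dm * Real.sqrt ((1-γ)^3))
          = n * (Real.sqrt N * (Real.sqrt dm * Real.sqrt ((1-γ)^3))) := by ring
        _ = n * (Real.sqrt 2 * Real.sqrt α) := by rw [e1, e2]
        _ ≤ n * (2 * Real.sqrt α) := by
            have := mul_le_mul_of_nonneg_right e3 (Real.sqrt_nonneg α)
            nlinarith [Real.sqrt_nonneg α]
        _ ≤ 6 * n * Real.sqrt α := by nlinarith [Real.sqrt_nonneg α]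
    calc ∫ ω, Real.sqrt (∑ s, (V k ω s - Vpi s)^2) ∂μ ≤ n * c := hfinal
      _ = n * Real.sqrt N + Real.sqrt M0 * n * ρ^k := by rw [hc_def]; ring
      _ ≤ 6 * n * Real.sqrt α / (Real.sqrt dm * Real.sqrt ((1-γ)^3))
            + Real.sqrt M0 * n * ρ^k := by linarith [hNsqrt]
  · -- large step size: crude bound
    push_neg at hcase
    have h9n : 1 - γ ≤ 9*n^2*α := by
      rw [div_lt_iff₀ (by positivity)] at hcase
      nlinarith
    have hptk : ∀ ω, Real.sqrt (∑ s, (V k ω s - Vpi s)^2)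
        ≤ Real.sqrt n * (2*M) := by
      intro ω
      have h1 : ∑ s, (V k ω s - Vpi s)^2 ≤ n * (2*M)^2 := by
        calc ∑ s, (V k ω s - Vpi s)^2 ≤ ∑ _s : S, (2*M)^2 :=
              Finset.sum_le_sum fun s _ => by
                rw [← sq_abs]
                exact pow_le_pow_left₀ (abs_nonneg _) (heB k ω s) 2
          _ = n * (2*M)^2 := by rw [Finset.sum_const, Finset.card_univ, nsmul_eq_mul]
      calc Real.sqrt (∑ s, (V k ω s - Vpi s)^2) ≤ Real.sqrt (n * (2*M)^2) :=
            Real.sqrt_le_sqrt h1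
        _ = Real.sqrt n * (2*M) := by
            rw [Real.sqrt_mul (by positivity), Real.sqrt_sq (by positivity)]
    have hcrude : ∫ ω, Real.sqrt (∑ s, (V k ω s - Vpi s)^2) ∂μ
        ≤ Real.sqrt n * (2*M) := by
      calc ∫ ω, Real.sqrt (∑ s, (V k ω s - Vpi s)^2) ∂μ
          ≤ ∫ _ω, Real.sqrt n * (2*M) ∂μ :=
            integral_mono (hint k fun W _ => Real.sqrt (∑ s, (W s - Vpi s)^2))
              (integrable_const _) hptk
        _ = Real.sqrt n * (2*M) := by simp
    have hT1 : Real.sqrt n * (2*M) ≤ 6 * n * Real.sqrt α /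
        (Real.sqrt dm * Real.sqrt ((1-γ)^3)) := by
      rw [le_div_iff₀ hden]
      have h1 : Real.sqrt ((1-γ)^3) = (1-γ) * Real.sqrt (1-γ) := by
        rw [pow_succ, Real.sqrt_mul (by positivity), Real.sqrt_sq h1γ.le]
      have h2 : Real.sqrt n * Real.sqrt dm ≤ 1 := by
        rw [← Real.sqrt_mul (by positivity), show (1:ℝ) = Real.sqrt 1 by simp]
        exact Real.sqrt_le_sqrt (by nlinarith [hndm])
      have h3 : Real.sqrt (1-γ) ≤ 3*n*Real.sqrt α := by
        calc Real.sqrt (1-γ) ≤ Real.sqrt (9*n^2*α) := Real.sqrt_le_sqrt h9n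
          _ = 3*n*Real.sqrt α := by
              rw [show 9*n^2*α = (3*n)^2*α by ring,
                Real.sqrt_mul (by positivity), Real.sqrt_sq (by positivity)]
      have hMg : M * (1-γ) = 1 := by rw [hM_def]; field_simp
      calc Real.sqrt n * (2*M) * (Real.sqrt dm * Real.sqrt ((1-γ)^3))
          = 2*(Real.sqrt n * Real.sqrt dm) * Real.sqrt (1-γ) * (M*(1-γ)) := by
            rw [h1]; ring
        _ = 2*(Real.sqrt n * Real.sqrt dm) * Real.sqrt (1-γ) := by
            rw [hMg, mul_one]
        _ ≤ 2*1*Real.sqrt (1-γ) := by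
            have h4 : (0:ℝ) ≤ Real.sqrt (1-γ) := Real.sqrt_nonneg _
            nlinarith [h2]
        _ ≤ 2*(3*n*Real.sqrt α) := by
            have := h3; linarith [h3]
        _ = 6 * n * Real.sqrt α := by ring
    have hT2 : 0 ≤ Real.sqrt M0 * n * ρ^k := by positivity
    calc ∫ ω, Real.sqrt (∑ s, (V k ω s - Vpi s)^2) ∂μ
        ≤ Real.sqrt n * (2*M) := hcrude
      _ ≤ 6 * n * Real.sqrt α / (Real.sqrt dm * Real.sqrt ((1-γ)^3)) := hT1
      _ ≤ 6 * n * Real.sqrt α / (Real.sqrt dm * Real.sqrt ((1-γ)^3))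
            + Real.sqrt M0 * n * ρ^k := by linarith [hT2]
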